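/- arXiv:2511.08783 — 2 statements merged into one kernel-verified Lean document; each statement's English description precedes it below -/
import Mathlib

section
/- The twisted Gauss sum g(k, mn) for coprime moduli factors as g(k, mn) = χ_m(n) χ_n(m) g(k, m) g(k, n). -/
open Complex

/-- `ω = e^{2πi/3}`, a primitive third root of unity. -/
noncomputable def ω : ℂ := Complex.exp (2 * Real.pi * Complex.I / 3)

/-- The ring of Eisenstein integers `ℤ[ω]`, realized as a subalgebra of `ℂ`. -/
noncomputable def Eisen : Subalgebra ℤ ℂ := Algebra.adjoin ℤ ({ω} : Set ℂ)

/-- The norm `N(z) = z·conj z` of an Eisenstein integer, as a natural number. -/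
noncomputable def NE (z : Eisen) : ℕ := ⌊Complex.normSq (z : ℂ)⌋₊

/-- The exponential `e(z) = exp(2πi(z + conj z)) = exp(2πi·Tr_{ℂ/ℝ}(z))`. -/
noncomputable def eFun (z : ℂ) : ℂ :=
  Complex.exp (2 * Real.pi * Complex.I * (z + (starRingEnd ℂ) z))

/-- `R` is a complete residue system modulo `n` in `ℤ[ω]`. -/
def IsCRS (n : Eisen) (R : Finset Eisen) : Prop :=
  ∀ x : Eisen, ∃! r : Eisen, r ∈ R ∧ n ∣ (x - r)

/-- `χ` is the family of cubic residue symbols: `χ n r = (r/n)₃`.  It is multiplicative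
in the modulus, trivial for unit moduli, and for a prime modulus `p` it is the cubic
residue symbol: `χ p r = 0` iff `p ∣ r`, otherwise `χ p r` is a cube root of unity with
`χ p r ≡ r^{(N(p)-1)/3} (mod p)`. -/
def IsCubicFamily (χ : Eisen → Eisen → Eisen) : Prop :=
  (∀ m n r : Eisen, χ (m * n) r = χ m r * χ n r) ∧
  (∀ u r : Eisen, IsUnit u → χ u r = 1) ∧
  (∀ p : Eisen, Prime p → ∀ r : Eisen,
    (p ∣ r → χ p r = 0) ∧
    (¬ p ∣ r → (χ p r) ^ 3 = 1 ∧ p ∣ (χ p r - r ^ ((NE p - 1) / 3))))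

/-- The generalized cubic Gauss sum `g(k, n) = ∑_{r mod n} χ_n(r) e(kr/n)`,
computed with respect to a complete residue system `R` modulo `n`. -/
noncomputable def gSum (χ : Eisen → Eisen → Eisen) (k n : Eisen) (R : Finset Eisen) : ℂ :=
  ∑ r ∈ R, (χ n r : ℂ) * eFun ((k : ℂ) * (r : ℂ) / (n : ℂ))

/- ## Basic facts about ω -/

lemma omega_pow_three : ω ^ 3 = 1 := by
  rw [ω, ← Complex.exp_nat_mul]
  rw [show (3:ℕ) * (2 * (Real.pi:ℂ) * Complex.I / 3) = 2 * Real.pi * Complex.I by push_cast; ring]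
  exact Complex.exp_two_pi_mul_I

lemma omega_ne_one : ω ≠ 1 := by
  rw [ω]
  intro h
  rw [Complex.exp_eq_one_iff] at h
  obtain ⟨n, hn⟩ := h
  have hπ : (Real.pi : ℂ) ≠ 0 := by simpa using Real.pi_ne_zero
  have h2 : (2 : ℂ) * Real.pi * Complex.I ≠ 0 := by
    simp [hπ, Complex.I_ne_zero]
  have h : (2*(Real.pi:ℂ)*Complex.I) * (1/3 - n) = 0 := by linear_combination hn
  have h4 : (1:ℂ)/3 - n = 0 := (mul_eq_zero.mp h).resolve_left h2
  have h5 : ((3 * n : ℤ) : ℂ) = 1 := by push_cast; linear_combination (-3 : ℂ) * h4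
  have : (3 * n : ℤ) = 1 := by exact_mod_cast h5
  omega

lemma omega_ne_zero : ω ≠ 0 := Complex.exp_ne_zero _

lemma omega_quad : ω ^ 2 + ω + 1 = 0 := by
  have h2 : (ω - 1) * (ω ^ 2 + ω + 1) = 0 := by linear_combination omega_pow_three
  exact (mul_eq_zero.mp h2).resolve_left (sub_ne_zero.mpr omega_ne_one)

lemma conj_omega : (starRingEnd ℂ) ω = ω ^ 2 := by
  have hinv : ω ^ 2 = ω⁻¹ :=
    eq_inv_of_mul_eq_one_left (by linear_combination omega_pow_three)
  have : (starRingEnd ℂ) (2 * (Real.pi:ℂ) * Complex.I / 3) = -(2 * Real.pi * Complex.I / 3) := by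
    rw [map_div₀, map_mul, map_mul, map_ofNat, map_ofNat, Complex.conj_I, Complex.conj_ofReal]
    ring
  rw [hinv, ω, ← Complex.exp_neg, ← this, Complex.exp_conj]

lemma conj_omega' : (starRingEnd ℂ) ω = -1 - ω := by
  rw [conj_omega]; linear_combination omega_quad

/- ## Structure of Eisen -/

lemma omega_mem : ω ∈ Eisen := Algebra.subset_adjoin rfl

noncomputable def ωE : Eisen := ⟨ω, omega_mem⟩

lemma intE_mem (a : ℤ) : ((a : ℂ)) ∈ Eisen := by
  simpa using Subalgebra.algebraMap_mem Eisen a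

lemma mem_repr {z : ℂ} (hz : z ∈ Eisen) : ∃ a b : ℤ, z = (a : ℂ) + (b : ℂ) * ω := by
  induction hz using Algebra.adjoin_induction with
  | mem x hx =>
    rw [Set.mem_singleton_iff] at hx
    exact ⟨0, 1, by simp [hx]⟩
  | algebraMap r => exact ⟨r, 0, by simp⟩
  | add x y hx hy ihx ihy =>
    obtain ⟨a, b, rfl⟩ := ihx
    obtain ⟨c, d, rfl⟩ := ihy
    exact ⟨a + c, b + d, by push_cast; ring⟩
  | mul x y hx hy ihx ihy =>
    obtain ⟨a, b, rfl⟩ := ihx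
    obtain ⟨c, d, rfl⟩ := ihy
    refine ⟨a * c - b * d, a * d + b * c - b * d, ?_⟩
    push_cast
    linear_combination (b : ℂ) * d * omega_quad

lemma repr_mem (a b : ℤ) : ((a : ℂ) + (b : ℂ) * ω) ∈ Eisen :=
  Eisen.add_mem (intE_mem a) (Eisen.mul_mem (intE_mem b) omega_mem)

/- ## The norm -/

lemma normSq_repr (a b : ℤ) :
    (Complex.normSq ((a : ℂ) + (b : ℂ) * ω) : ℂ) = ((a^2 - a*b + b^2 : ℤ) : ℂ) := by
  rw [← Complex.mul_conj]
  rw [map_add, map_mul, map_intCast, map_intCast, conj_omega]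
  push_cast
  linear_combination ((a:ℂ)*b) * omega_quad + (b:ℂ)^2 * omega_pow_three

lemma normSq_repr' (a b : ℤ) :
    Complex.normSq ((a : ℂ) + (b : ℂ) * ω) = ((a^2 - a*b + b^2 : ℤ) : ℝ) := by
  have := normSq_repr a b
  exact_mod_cast this

lemma repr_nonneg (a b : ℤ) : 0 ≤ a^2 - a*b + b^2 := by nlinarith [sq_nonneg (a - b), sq_nonneg a, sq_nonneg b]

lemma NE_repr {z : Eisen} {a b : ℤ} (h : (z : ℂ) = (a : ℂ) + (b : ℂ) * ω) :
    (NE z : ℤ) = a^2 - a*b + b^2 := by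
  have hc : ((a^2 - a*b + b^2 : ℤ) : ℝ) = (((a^2 - a*b + b^2).toNat : ℕ) : ℝ) := by
    exact_mod_cast (Int.toNat_of_nonneg (repr_nonneg a b)).symm
  rw [NE, h, normSq_repr', hc, Nat.floor_natCast]
  exact Int.toNat_of_nonneg (repr_nonneg a b)

lemma NE_coe (z : Eisen) : ((NE z : ℂ)) = (z : ℂ) * (starRingEnd ℂ) (z : ℂ) := by
  obtain ⟨a, b, h⟩ := mem_repr z.2
  have h1 : (NE z : ℤ) = a^2 - a*b + b^2 := NE_repr h
  rw [Complex.mul_conj, h, normSq_repr]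
  exact_mod_cast congrArg (fun x : ℤ => (x : ℂ)) h1

lemma coe_injE : Function.Injective (fun z : Eisen => (z : ℂ)) := Subtype.coe_injective

lemma NE_mul (z w : Eisen) : NE (z * w) = NE z * NE w := by
  have h : ((NE (z*w) : ℂ)) = ((NE z * NE w : ℕ) : ℂ) := by
    rw [NE_coe]
    push_cast
    rw [NE_coe, NE_coe]
    push_cast
    rw [map_mul]
    ring
  exact_mod_cast h

lemma NE_eq_zero_iff (z : Eisen) : NE z = 0 ↔ z = 0 := by
  constructor
  · intro h
    have : ((NE z : ℂ)) = 0 := by rw [h]; norm_num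
    rw [NE_coe] at this
    rcases mul_eq_zero.mp this with h | h
    · exact Subtype.ext h
    · exact Subtype.ext (by simpa using congrArg (starRingEnd ℂ) h)
  · rintro rfl
    simp [NE]

lemma NE_one : NE 1 = 1 := by
  have : ((NE (1 : Eisen) : ℂ)) = 1 := by rw [NE_coe]; simp
  exact_mod_cast this

lemma NE_unit {u : Eisen} (hu : IsUnit u) : NE u = 1 := by
  obtain ⟨v, hv⟩ := hu.exists_right_inv
  have := NE_mul u v
  rw [hv, NE_one] at this
  exact Nat.eq_one_of_mul_eq_one_right this.symm

noncomputable def lam : Eisen := 1 - ωE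

lemma lam_coe : (lam : ℂ) = 1 - ω := rfl

lemma NE_lam : NE lam = 3 := by
  have h : (lam : ℂ) = ((1 : ℤ) : ℂ) + ((-1 : ℤ) : ℂ) * ω := by rw [lam_coe]; push_cast; ring
  have := NE_repr h
  omega

lemma NE_three : NE (3 : Eisen) = 9 := by
  have h : ((3 : Eisen) : ℂ) = ((3 : ℤ) : ℂ) + ((0 : ℤ) : ℂ) * ω := by
    rw [show ((3 : Eisen) : ℂ) = 3 by norm_cast]; push_cast; ring
  have := NE_repr h
  omega

lemma lam_not_unit : ¬ IsUnit lam := fun h => by simpa [NE_lam] using NE_unit h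

lemma three_not_unit : ¬ IsUnit (3 : Eisen) := fun h => by simpa [NE_three] using NE_unit h

lemma lam_dvd_three : lam ∣ (3 : Eisen) := by
  refine ⟨lam * (-ωE^2), ?_⟩
  apply Subtype.ext
  push_cast [lam_coe]
  show (3 : ℂ) = (1 - ω) * ((1 - ω) * (-ω^2))
  linear_combination (ω - 2) * omega_pow_three + omega_quad

lemma unit_omegaE : IsUnit ωE := by
  refine IsUnit.of_mul_eq_one (a := ωE) (ωE^2) ?_
  apply Subtype.ext
  push_cast
  show ω * ω^2 = 1
  linear_combination omega_pow_three

/-- m ≡ 1 mod 3 implies m is not divisible by λ and m ≠ 0. -/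
lemma not_lam_dvd {m : Eisen} (hm : (3 : Eisen) ∣ m - 1) : ¬ lam ∣ m := by
  intro hdvd
  have h1 : lam ∣ m - 1 := dvd_trans lam_dvd_three hm
  have h2 : lam ∣ 1 := by
    have := dvd_sub hdvd h1
    simpa using this
  exact lam_not_unit (isUnit_of_dvd_one h2)

lemma conjE_mem (z : Eisen) : (starRingEnd ℂ) (z:ℂ) ∈ Eisen := by
  obtain ⟨a, b, h⟩ := mem_repr z.2
  rw [h, map_add, map_mul, map_intCast, map_intCast, conj_omega']
  have : (a:ℂ) + (b:ℂ) * (-1 - ω) = ((a - b : ℤ) : ℂ) + ((-b : ℤ) : ℂ) * ω := by push_cast; ring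
  rw [this]
  exact repr_mem _ _

noncomputable def conjE (z : Eisen) : Eisen := ⟨(starRingEnd ℂ) (z:ℂ), conjE_mem z⟩

lemma NE_conjE (z : Eisen) : NE (conjE z) = NE z := by
  simp [NE, conjE, Complex.normSq_conj]

lemma mul_conjE (z : Eisen) : ((z * conjE z : Eisen) : ℂ) = (NE z : ℂ) := by
  rw [NE_coe]; rfl

lemma eis_div (x y : Eisen) (hy : y ≠ 0) : ∃ q r : Eisen, x = y * q + r ∧ NE r < NE y := by
  obtain ⟨A, B, hAB⟩ := mem_repr (x * conjE y).2
  set N : ℤ := (NE y : ℤ) with hN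
  have hN0 : 0 < N := by
    have := (NE_eq_zero_iff y).not.mpr hy
    have h2 : NE y ≠ 0 := fun h => hy ((NE_eq_zero_iff y).mp h)
    omega
  set q1 : ℤ := round ((A : ℚ)/(N : ℚ)) with hq1
  set q2 : ℤ := round ((B : ℚ)/(N : ℚ)) with hq2
  set q : Eisen := ⟨(q1:ℂ) + (q2:ℂ)*ω, repr_mem q1 q2⟩ with hq
  refine ⟨q, x - y * q, by ring, ?_⟩
  set r : Eisen := x - y * q with hr
  have habs : ∀ (C : ℤ) (c : ℤ), c = round ((C : ℚ)/(N : ℚ)) → 2 * |C - N * c| ≤ N := by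
    intro C c hc
    have h1 : |(C : ℚ)/(N:ℚ) - c| ≤ 1/2 := by rw [hc]; exact abs_sub_round _
    have hNQ : (0:ℚ) < (N:ℚ) := by exact_mod_cast hN0
    have h2 : |(C:ℚ) - N * c| ≤ (N:ℚ)/2 := by
      have := mul_le_mul_of_nonneg_left h1 (le_of_lt hNQ)
      rw [← abs_of_pos hNQ, ← abs_mul] at this
      calc |(C:ℚ) - N * c| = |(N:ℚ)| * |(C:ℚ)/(N:ℚ) - c| := by
            rw [← abs_mul]; congr 1; field_simp
        _ ≤ (N:ℚ) * (1/2) := by rw [abs_of_pos hNQ]; exact mul_le_mul_of_nonneg_left h1 (le_of_lt hNQ)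
        _ = (N:ℚ)/2 := by ring
    have h3 : 2 * |(C:ℚ) - N*c| ≤ (N:ℚ) := by linarith
    exact_mod_cast h3
  -- r * conjE y = α + β ω
  have hkey : ((r * conjE y : Eisen) : ℂ) = ((A - N*q1 : ℤ) : ℂ) + ((B - N*q2 : ℤ):ℂ) * ω := by
    have hyc : (y : ℂ) * ((conjE y : Eisen) : ℂ) = (N : ℂ) := by
      push_cast [hN]
      exact_mod_cast mul_conjE y
    have hq' : ((q : Eisen) : ℂ) = (q1:ℂ) + (q2:ℂ)*ω := rfl
    have hAB' : ((x : ℂ)) * ((conjE y : Eisen):ℂ) = (A:ℂ) + (B:ℂ)*ω := by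
      rw [← hAB]; rfl
    calc ((r * conjE y : Eisen) : ℂ)
        = (x:ℂ) * ((conjE y : Eisen):ℂ) - ((q:Eisen):ℂ) * ((y:ℂ) * ((conjE y : Eisen):ℂ)) := by
          push_cast [hr]; ring
      _ = (A:ℂ) + (B:ℂ)*ω - ((q1:ℂ) + (q2:ℂ)*ω) * (N:ℂ) := by rw [hAB', hq', hyc]
      _ = ((A - N*q1 : ℤ):ℂ) + ((B - N*q2 : ℤ):ℂ)*ω := by push_cast; ring
  have hNE_r : (NE r : ℤ) * N = (A - N*q1)^2 - (A - N*q1)*(B - N*q2) + (B - N*q2)^2 := by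
    have h1 := NE_repr hkey
    rw [NE_mul, NE_conjE] at h1
    push_cast at h1
    linarith
  set α : ℤ := A - N * q1 with hα
  set β : ℤ := B - N * q2 with hβ
  have hαb : 2 * |α| ≤ N := habs A q1 hq1
  have hβb : 2 * |β| ≤ N := habs B q2 hq2
  have hlt : (NE r : ℤ) * N < N * N := by
    have h4 : α^2 - α*β + β^2 < N * N := by
      nlinarith [_root_.sq_abs α, _root_.sq_abs β, abs_nonneg α, abs_nonneg β, abs_mul α β,
        le_abs_self (α*β), neg_abs_le (α*β)]
    omega
  have hfin : (NE r : ℤ) < N := lt_of_mul_lt_mul_right hlt (le_of_lt hN0)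
  rw [hN] at hfin
  exact_mod_cast hfin

set_option maxHeartbeats 4000000 in
set_option synthInstance.maxHeartbeats 2000000 in
instance : IsPrincipalIdealRing Eisen := by
  constructor
  intro I
  by_cases hI : I = ⊥
  · exact ⟨0, by rw [hI, Submodule.span_zero_singleton]⟩
  · obtain ⟨z, hzI, hz0⟩ := (Submodule.ne_bot_iff I).mp hI
    set S := {nn : ℕ | ∃ y, y ∈ I ∧ y ≠ 0 ∧ NE y = nn} with hS
    have hSne : S.Nonempty := ⟨NE z, z, hzI, hz0, rfl⟩
    obtain ⟨y, hyI, hy0, hyN⟩ := Nat.sInf_mem hSne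
    refine ⟨y, ?_⟩
    ext x
    rw [Ideal.submodule_span_eq, Ideal.mem_span_singleton]
    constructor
    · intro hx
      obtain ⟨q, r, hqr, hlt⟩ := eis_div x y hy0
      have hrI : r ∈ I := by
        have : r = x - y * q := by rw [hqr]; ring
        rw [this]
        exact I.sub_mem hx (I.mul_mem_right q hyI)
      by_cases hr0 : r = 0
      · exact ⟨q, by rw [hqr, hr0, add_zero]⟩
      · exfalso
        have : NE r ∈ S := ⟨r, hrI, hr0, rfl⟩
        have := Nat.sInf_le this
        omega
    · rintro ⟨c, rfl⟩
      exact I.mul_mem_right c hyI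

set_option maxHeartbeats 1000000 in
set_option synthInstance.maxHeartbeats 1000000 in
instance : UniqueFactorizationMonoid Eisen := by infer_instance

lemma omegaE_cube : ωE ^ 3 = 1 := by
  apply Subtype.ext; push_cast; exact omega_pow_three

lemma omegaE_quad : ωE ^ 2 + ωE + 1 = 0 := by
  apply Subtype.ext; push_cast; exact omega_quad

lemma cube_roots_eq {z : Eisen} (h : z ^ 3 = 1) : z = 1 ∨ z = ωE ∨ z = ωE ^ 2 := by
  have hfac : (z - 1) * ((z - ωE) * (z - ωE ^ 2)) = 0 := by
    linear_combination h + (z - z^2) * omegaE_quad + (z - 1) * omegaE_cube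
  rcases mul_eq_zero.mp hfac with h1 | h2
  · left; exact sub_eq_zero.mp h1
  · rcases mul_eq_zero.mp h2 with h1 | h1
    · right; left; exact sub_eq_zero.mp h1
    · right; right; exact sub_eq_zero.mp h1

lemma dvd_lam_of_dvd {p d : Eisen} (u : Eisen) (hu : IsUnit u) (hd : d = lam * u)
    (hpd : p ∣ d) : p ∣ lam := by
  rw [hd] at hpd
  exact (IsUnit.dvd_mul_right hu).mp hpd

lemma cube_root_diff {p ζ ξ : Eisen} (hl : ¬ p ∣ lam)
    (hζ : ζ ^ 3 = 1) (hξ : ξ ^ 3 = 1) (hd : p ∣ ζ - ξ) : ζ = ξ := by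
  have hu1 : IsUnit (1 : Eisen) := isUnit_one
  have hun : IsUnit (-1 : Eisen) := IsUnit.neg isUnit_one
  have huo : IsUnit ωE := unit_omegaE
  have huo2 : IsUnit (ωE ^ 2) := huo.pow 2
  have huno : IsUnit (-ωE) := huo.neg
  have huno2 : IsUnit (-ωE ^ 2) := huo2.neg
  rcases cube_roots_eq hζ with rfl | rfl | rfl <;>
    rcases cube_roots_eq hξ with rfl | rfl | rfl
  · rfl
  · exact ((hl (dvd_lam_of_dvd _ hu1 (by unfold lam; ring) hd))).elim
  · exact ((hl (dvd_lam_of_dvd _ huno2 (by unfold lam; linear_combination (-1 : Eisen) * omegaE_cube) hd))).elim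
  · exact ((hl (dvd_lam_of_dvd _ hun (by unfold lam; ring) hd))).elim
  · rfl
  · exact ((hl (dvd_lam_of_dvd _ huo (by unfold lam; ring) hd))).elim
  · exact ((hl (dvd_lam_of_dvd _ huo2 (by unfold lam; linear_combination omegaE_cube) hd))).elim
  · exact ((hl (dvd_lam_of_dvd _ huno (by unfold lam; ring) hd))).elim
  · rfl

lemma isUnit_of_NE_one {s : Eisen} (h : NE s = 1) : IsUnit s := by
  refine IsUnit.of_mul_eq_one (a := s) (conjE s) (Subtype.ext ?_)
  have hc := NE_coe s
  rw [h] at hc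
  push_cast
  rw [show ((conjE s : Eisen) : ℂ) = (starRingEnd ℂ) (s : ℂ) from rfl, ← hc]
  norm_num

lemma lam_irreducible : Irreducible lam := by
  refine ⟨lam_not_unit, fun s t hst => ?_⟩
  have h3 : NE s * NE t = 3 := by rw [← NE_mul, ← hst, NE_lam]
  have hd : NE s ∣ 3 := ⟨NE t, h3.symm⟩
  rcases (Nat.prime_three.eq_one_or_self_of_dvd (NE s) hd) with h | h
  · exact Or.inl (isUnit_of_NE_one h)
  · refine Or.inr (isUnit_of_NE_one ?_)
    rw [h] at h3
    omega

lemma not_dvd_lam_of_prime {p a : Eisen} (hp : Prime p) (hl : ¬ lam ∣ p * a) : ¬ p ∣ lam := by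
  intro hpl
  obtain ⟨c, hc⟩ := hpl
  rcases lam_irreducible.isUnit_or_isUnit hc with hup | huc
  · exact hp.not_unit hup
  · apply hl
    obtain ⟨cu, hcu⟩ := huc
    have : p = lam * (cu⁻¹ : Units Eisen) := by
      rw [hc, ← hcu]
      simp [mul_assoc]
    exact Dvd.dvd.mul_right ⟨((cu⁻¹ : Units Eisen) : Eisen), this⟩ a

section Chi
variable {χ : Eisen → Eisen → Eisen} {p : Eisen}

lemma chi_prime_periodic (hχ : IsCubicFamily χ) (hp : Prime p) (hl : ¬ p ∣ lam) {r r' : Eisen}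
    (h : p ∣ r - r') : χ p r = χ p r' := by
  obtain ⟨-, -, hpr⟩ := hχ
  by_cases hr : p ∣ r
  · have hr' : p ∣ r' := by
      have := dvd_sub hr h
      simpa using this
    rw [(hpr p hp r).1 hr, (hpr p hp r').1 hr']
  · have hr' : ¬ p ∣ r' := by
      intro hc
      exact hr (by simpa using dvd_add h hc)
    obtain ⟨hcube, hcong⟩ := (hpr p hp r).2 hr
    obtain ⟨hcube', hcong'⟩ := (hpr p hp r').2 hr'
    refine cube_root_diff hl hcube hcube' ?_
    have hpow : p ∣ r ^ ((NE p - 1)/3) - r' ^ ((NE p - 1)/3) :=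
      dvd_trans h (sub_dvd_pow_sub_pow r r' _)
    have h2 := dvd_add (dvd_sub hcong hcong') hpow
    have heq : χ p r - χ p r' = (χ p r - r ^ ((NE p - 1)/3)) - (χ p r' - r' ^ ((NE p - 1)/3))
        + (r ^ ((NE p - 1)/3) - r' ^ ((NE p - 1)/3)) := by ring
    rw [heq]
    exact h2

lemma chi_prime_mul (hχ : IsCubicFamily χ) (hp : Prime p) (hl : ¬ p ∣ lam) (a b : Eisen) :
    χ p (a * b) = χ p a * χ p b := by
  obtain ⟨-, -, hpr⟩ := hχ
  by_cases ha : p ∣ a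
  · rw [(hpr p hp a).1 ha, (hpr p hp (a*b)).1 (ha.mul_right b), zero_mul]
  · by_cases hb : p ∣ b
    · rw [(hpr p hp b).1 hb, (hpr p hp (a*b)).1 (hb.mul_left a), mul_zero]
    · have hab : ¬ p ∣ a * b := by
        intro hc
        rcases hp.dvd_mul.mp hc with h | h
        exacts [ha h, hb h]
      obtain ⟨hcube, hcong⟩ := (hpr p hp (a*b)).2 hab
      obtain ⟨hcubea, hconga⟩ := (hpr p hp a).2 ha
      obtain ⟨hcubeb, hcongb⟩ := (hpr p hp b).2 hb
      refine cube_root_diff hl hcube (by rw [mul_pow, hcubea, hcubeb, one_mul]) ?_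
      have key : χ p (a*b) - χ p a * χ p b =
          (χ p (a*b) - (a*b) ^ ((NE p - 1)/3))
          - (χ p a - a ^ ((NE p - 1)/3)) * χ p b
          - a ^ ((NE p - 1)/3) * (χ p b - b ^ ((NE p - 1)/3)) := by
        rw [mul_pow]; ring
      rw [key]
      exact dvd_sub (dvd_sub hcong (hconga.mul_right _)) (hcongb.mul_left _)

lemma chi_good (hχ : IsCubicFamily χ) (m : Eisen) (hl : ¬ lam ∣ m) :
    (∀ r r' : Eisen, m ∣ r - r' → χ m r = χ m r') ∧
    (∀ a b : Eisen, χ m (a * b) = χ m a * χ m b) := by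
  have hmod := hχ.1
  have hunit := hχ.2.1
  induction m using UniqueFactorizationMonoid.induction_on_prime with
  | h₁ => exact absurd (dvd_zero lam) hl
  | h₂ u hu => exact ⟨fun r r' _ => by rw [hunit u r hu, hunit u r' hu],
      fun a b => by rw [hunit u _ hu, hunit u _ hu, hunit u _ hu, one_mul]⟩
  | h₃ a p ha hp ih =>
    have hlp : ¬ p ∣ lam := not_dvd_lam_of_prime hp hl
    have hla : ¬ lam ∣ a := fun hc => hl (hc.mul_left p)
    obtain ⟨ihper, ihmul⟩ := ih hla
    constructor
    · intro r r' h
      rw [hmod, hmod]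
      rw [chi_prime_periodic hχ hp hlp (dvd_trans (dvd_mul_right p a) h),
        ihper r r' (dvd_trans (dvd_mul_left a p) h)]
    · intro x y
      rw [hmod, hmod, hmod, chi_prime_mul hχ hp hlp x y, ihmul x y]
      ring

end Chi

/- ## e-function -/

lemma eFun_add (z w : ℂ) : eFun (z + w) = eFun z * eFun w := by
  rw [eFun, eFun, eFun, ← Complex.exp_add, map_add]
  ring_nf

lemma eFun_eisen (z : Eisen) : eFun (z : ℂ) = 1 := by
  obtain ⟨a, b, h⟩ := mem_repr z.2
  have htr : (z:ℂ) + (starRingEnd ℂ) (z:ℂ) = ((2*a - b : ℤ):ℂ) := by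
    rw [h, map_add, map_mul, map_intCast, map_intCast, conj_omega']
    push_cast
    ring
  rw [eFun, htr]
  rw [show 2 * (Real.pi:ℂ) * Complex.I * ((2*a - b : ℤ):ℂ)
      = ((2*a - b : ℤ):ℂ) * (2 * (Real.pi:ℂ) * Complex.I) by ring]
  exact Complex.exp_int_mul_two_pi_mul_I _

/- ## complete residue systems -/

noncomputable def crsRep {n : Eisen} {R : Finset Eisen} (h : IsCRS n R) (x : Eisen) : Eisen :=
  (h x).exists.choose

lemma crsRep_mem {n : Eisen} {R : Finset Eisen} (h : IsCRS n R) (x : Eisen) :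
    crsRep h x ∈ R := (h x).exists.choose_spec.1

lemma crsRep_dvd {n : Eisen} {R : Finset Eisen} (h : IsCRS n R) (x : Eisen) :
    n ∣ x - crsRep h x := (h x).exists.choose_spec.2

lemma crsRep_eq {n : Eisen} {R : Finset Eisen} (h : IsCRS n R) {x r : Eisen}
    (hr : r ∈ R) (hd : n ∣ x - r) : crsRep h x = r :=
  (h x).unique ⟨crsRep_mem h x, crsRep_dvd h x⟩ ⟨hr, hd⟩

/- ## main theorem -/

set_option maxHeartbeats 1000000 in
/-- For coprime moduli `m, n ≡ 1 (mod 3)`, the twisted Gauss sum factors as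
`g(k, mn) = χ_m(n) χ_n(m) g(k, m) g(k, n)`. -/
theorem gSum_mul (χ : Eisen → Eisen → Eisen) (hχ : IsCubicFamily χ)
    (k m n : Eisen) (hmn : IsCoprime m n)
    (hm1 : (3 : Eisen) ∣ m - 1) (hn1 : (3 : Eisen) ∣ n - 1)
    (R Rm Rn : Finset Eisen)
    (hR : IsCRS (m * n) R) (hRm : IsCRS m Rm) (hRn : IsCRS n Rn) :
    gSum χ k (m * n) R =
      ((χ m n : Eisen) : ℂ) * ((χ n m : Eisen) : ℂ) * gSum χ k m Rm * gSum χ k n Rn := by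
  obtain ⟨u, v, huv⟩ := hmn
  have hlm : ¬ lam ∣ m := not_lam_dvd hm1
  have hln : ¬ lam ∣ n := not_lam_dvd hn1
  have hm0 : m ≠ 0 := fun h => hlm (h ▸ dvd_zero lam)
  have hn0 : n ≠ 0 := fun h => hln (h ▸ dvd_zero lam)
  have hmC : (m : ℂ) ≠ 0 := fun h => hm0 (Subtype.ext h)
  have hnC : (n : ℂ) ≠ 0 := fun h => hn0 (Subtype.ext h)
  obtain ⟨permM, mulM⟩ := chi_good hχ m hlm
  obtain ⟨permN, mulN⟩ := chi_good hχ n hln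
  have hmod := hχ.1
  have key : gSum χ k (m * n) R =
      ∑ p ∈ Rm ×ˢ Rn, (((χ m n : Eisen) : ℂ) * ((χ n m : Eisen) : ℂ)) *
        ((((χ m p.1 : Eisen)) : ℂ) * eFun ((k : ℂ) * (p.1 : ℂ) / (m : ℂ)) *
         ((((χ n p.2 : Eisen)) : ℂ) * eFun ((k : ℂ) * (p.2 : ℂ) / (n : ℂ)))) := by
    rw [gSum]
    refine Finset.sum_bij' (fun r _ => (crsRep hRm (v*r), crsRep hRn (u*r)))
      (fun p _ => crsRep hR (p.1*v*n^2 + p.2*u*m^2)) ?_ ?_ ?_ ?_ ?_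
    · intro r hr
      exact Finset.mem_product.mpr ⟨crsRep_mem hRm _, crsRep_mem hRn _⟩
    · intro p hp
      exact crsRep_mem hR _
    · -- left inverse
      intro r hr
      set a := crsRep hRm (v*r) with ha
      set b := crsRep hRn (u*r) with hb
      obtain ⟨t1, ht1⟩ := crsRep_dvd hRm (v*r)
      obtain ⟨t2, ht2⟩ := crsRep_dvd hRn (u*r)
      refine crsRep_eq hR hr ?_
      refine IsCoprime.mul_dvd ⟨u, v, huv⟩ ?_ ?_
      · exact ⟨-(r*u*(v*n+1)) - t1*v*n^2 + b*u*m, by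
          linear_combination (-(v*n^2))*ht1 + (r*(v*n+1))*huv⟩
      · exact ⟨-(r*v*(u*m+1)) - t2*u*m^2 + a*v*n, by
          linear_combination (-(u*m^2))*ht2 + (r*(u*m+1))*huv⟩
    · -- right inverse
      rintro ⟨a, b⟩ hp
      rw [Finset.mem_product] at hp
      obtain ⟨w, hw⟩ := crsRep_dvd hR (a*v*n^2 + b*u*m^2)
      set r := crsRep hR (a*v*n^2 + b*u*m^2) with hrdef
      have h1 : crsRep hRm (v*r) = a := by
        refine crsRep_eq hRm hp.1 ?_
        exact ⟨-(v*n*w) - a*u*(v*n+1) + b*u*v*m, by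
          linear_combination (-v)*hw + (a*(v*n+1))*huv⟩
      have h2 : crsRep hRn (u*r) = b := by
        refine crsRep_eq hRn hp.2 ?_
        exact ⟨-(u*m*w) - b*v*(u*m+1) + a*u*v*n, by
          linear_combination (-u)*hw + (b*(u*m+1))*huv⟩
      simp [h1, h2]
    · -- terms agree
      intro r hr
      set a := crsRep hRm (v*r) with ha
      set b := crsRep hRn (u*r) with hb
      obtain ⟨t1, ht1⟩ := crsRep_dvd hRm (v*r)
      obtain ⟨t2, ht2⟩ := crsRep_dvd hRn (u*r)
      have hca : χ m r = χ m n * χ m a := by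
        rw [← mulM]
        exact permM r (n*a) ⟨u*r + n*t1, by linear_combination n*ht1 + (-r)*huv⟩
      have hcb : χ n r = χ n m * χ n b := by
        rw [← mulN]
        exact permN r (m*b) ⟨v*r + m*t2, by linear_combination m*ht2 + (-r)*huv⟩
      have hsr : m*n ∣ (a*v*n^2 + b*u*m^2) - r := by
        refine IsCoprime.mul_dvd ⟨u, v, huv⟩ ?_ ?_
        · exact ⟨-(r*u*(v*n+1)) - t1*v*n^2 + b*u*m, by
            linear_combination (-(v*n^2))*ht1 + (r*(v*n+1))*huv⟩
        · exact ⟨-(r*v*(u*m+1)) - t2*u*m^2 + a*v*n, by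
            linear_combination (-(u*m^2))*ht2 + (r*(u*m+1))*huv⟩
      obtain ⟨w, hw⟩ := hsr
      have hmn0 : (m:ℂ)*(n:ℂ) ≠ 0 := mul_ne_zero hmC hnC
      have hwC : ((a:ℂ)*(v:ℂ)*(n:ℂ)^2 + (b:ℂ)*(u:ℂ)*(m:ℂ)^2) - (r:ℂ)
          = (m:ℂ)*(n:ℂ)*(w:ℂ) := by
        have h := congrArg (fun z : Eisen => (z:ℂ)) hw
        push_cast at h
        convert h using 1 <;> ring
      have huvC : (u:ℂ)*(m:ℂ) + (v:ℂ)*(n:ℂ) = 1 := by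
        have h := congrArg (fun z : Eisen => (z:ℂ)) huv
        push_cast at h
        convert h using 1
      have harg : (k:ℂ)*(r:ℂ)/((m:ℂ)*(n:ℂ)) =
          ((k:ℂ)*(a:ℂ)/(m:ℂ) + (k:ℂ)*(b:ℂ)/(n:ℂ))
            + ((-(k*(a*u + b*v + w)) : Eisen) : ℂ) := by
        push_cast
        field_simp
        linear_combination (-(k:ℂ))*hwC + ((k:ℂ)*(a:ℂ)*(n:ℂ) + (k:ℂ)*(b:ℂ)*(m:ℂ))*huvC
      have hchi : χ (m*n) r = (χ m n * χ m a) * (χ n m * χ n b) := by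
        rw [hmod, hca, hcb]
      have hcoe : (((m*n : Eisen)) : ℂ) = (m:ℂ)*(n:ℂ) := by push_cast; ring
      rw [hchi, hcoe, harg, eFun_add, eFun_eisen, mul_one, eFun_add]
      push_cast
      ring
  rw [key, Finset.sum_product, gSum, gSum, mul_assoc, Finset.sum_mul_sum, Finset.mul_sum]
  refine Finset.sum_congr rfl fun a _ => ?_
  rw [Finset.mul_sum]
end

section
/- For every y > 0 and every real t ≠ 0, the average (1/y) ∫_y^{2y} (sin(πtu)/(πtu))² du is bounded below by a positive absolute constant times min{1, 1/(t y)²}. -/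
open Real intervalIntegral

lemma abs_sin_mul_cos_le' (a : ℝ) : |Real.sin a * Real.cos a| ≤ 1/2 := by
  have h2 := Real.sin_two_mul a
  have h3 := Real.neg_one_le_sin (2*a)
  have h4 := Real.sin_le_one (2*a)
  rw [abs_le]; constructor <;> nlinarith

lemma chord_aux {x : ℝ} (hx0 : 0 ≤ x) (hx : x ≤ 3 * Real.pi / 4) :
    x / 4 ≤ Real.sin x := by
  have hπ := Real.pi_pos
  have hπ1 : Real.pi < 3.15 := by linarith [Real.pi_lt_d2]
  rcases le_or_gt x (Real.pi/2) with h | h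
  · have h1 := Real.mul_le_sin hx0 h
    have h3 : 2 * x ≤ Real.pi * Real.sin x := by
      have h4 := mul_le_mul_of_nonneg_left h1 hπ.le
      calc 2*x = Real.pi * (2/Real.pi*x) := by field_simp
        _ ≤ _ := h4
    nlinarith [h3, hx0, hπ1, hπ]
  · have h1 : Real.sin x = Real.cos (x - Real.pi/2) := by
      rw [Real.cos_sub]; simp
    have h2 : Real.cos (Real.pi/4) ≤ Real.cos (x - Real.pi/2) :=
      Real.cos_le_cos_of_nonneg_of_le_pi (by linarith) (by linarith) (by linarith)
    rw [Real.cos_pi_div_four] at h2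
    have h3 : (7:ℝ)/10 ≤ Real.sqrt 2 / 2 := by
      nlinarith [Real.sq_sqrt (by norm_num : (0:ℝ) ≤ 2), Real.sqrt_nonneg 2]
    have h4 : x / 4 ≤ 7/10 := by linarith
    rw [h1]; linarith

lemma sin_sq_bound {x : ℝ} (hx : |x| ≤ 3 * Real.pi / 4) :
    1 / 16 * x ^ 2 ≤ Real.sin x ^ 2 := by
  have key : ∀ z : ℝ, 0 ≤ z → z ≤ 3 * Real.pi / 4 →
      1 / 16 * z ^ 2 ≤ Real.sin z ^ 2 := by
    intro z hz0 hz
    have h := chord_aux hz0 hz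
    nlinarith [h, hz0]
  rcases le_or_gt 0 x with h | h
  · exact key x h (by rwa [abs_of_nonneg h] at hx)
  · have := key (-x) (by linarith) (by rwa [abs_of_neg h] at hx)
    simpa using this

set_option maxHeartbeats 1000000 in
/-- There is a positive absolute constant `c` such that for every `y > 0` and every
real `t ≠ 0`, the average `(1/y) ∫_y^{2y} (sin(πtu)/(πtu))² du` is at least
`c · min{1, 1/(ty)²}`. -/
theorem fejer_average_lower_bound :
    ∃ c : ℝ, 0 < c ∧ ∀ y t : ℝ, 0 < y → t ≠ 0 →
      c * min 1 (1 / (t * y) ^ 2) ≤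
        (1 / y) * ∫ u in y..(2 * y), (Real.sin (Real.pi * t * u) / (Real.pi * t * u)) ^ 2 := by
  refine ⟨1/1000, by norm_num, fun y t hy ht => ?_⟩
  have hπ := Real.pi_pos
  have hπ1 : Real.pi < 3.15 := Real.pi_lt_d2
  have hπ2 : 3.14 < Real.pi := by linarith [Real.pi_gt_d6]
  have hle : y ≤ 2 * y := by linarith
  have huIcc : Set.uIcc y (2*y) = Set.Icc y (2*y) := Set.uIcc_of_le hle
  have hne : ∀ u ∈ Set.Icc y (2*y), Real.pi * t * u ≠ 0 := by
    intro u hu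
    have : (0:ℝ) < u := lt_of_lt_of_le hy hu.1
    exact mul_ne_zero (mul_ne_zero (ne_of_gt hπ) ht) (ne_of_gt this)
  have hfc : ContinuousOn (fun u => (Real.sin (Real.pi * t * u) / (Real.pi * t * u)) ^ 2)
      (Set.uIcc y (2*y)) := by
    rw [huIcc]
    apply ContinuousOn.pow
    apply ContinuousOn.div
    · exact (Real.continuous_sin.comp (continuous_const.mul continuous_id)).continuousOn
    · exact (continuous_const.mul continuous_id).continuousOn
    · exact hne
  have hfi : IntervalIntegrable
      (fun u => (Real.sin (Real.pi * t * u) / (Real.pi * t * u)) ^ 2) MeasureTheory.volume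
      y (2*y) := hfc.intervalIntegrable
  have hmin1 : min 1 (1 / (t * y) ^ 2) ≤ 1 := min_le_left _ _
  have hmin2 : min 1 (1 / (t * y) ^ 2) ≤ 1 / (t * y) ^ 2 := min_le_right _ _
  have hmin0 : 0 ≤ min 1 (1 / (t * y) ^ 2) := le_min (by norm_num) (by positivity)
  rcases le_or_gt (|t * y|) (3/8) with hs | hs
  · -- small case: integrand ≥ 8/(9π²)
    have hpt : ∀ u ∈ Set.Icc y (2*y),
        ((1:ℝ)/16) ≤ (Real.sin (Real.pi * t * u) / (Real.pi * t * u)) ^ 2 := by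
      intro u hu
      have hx : |Real.pi * t * u| ≤ 3 * Real.pi / 4 := by
        have h1 : |Real.pi * t * u| = Real.pi * (|t| * u) := by
          rw [abs_mul, abs_mul, abs_of_nonneg hπ.le,
            abs_of_nonneg (le_of_lt (lt_of_lt_of_le hy hu.1)), mul_assoc]
        have h2 : |t| * u ≤ 2 * |t * y| := by
          have h3 : |t| * u ≤ |t| * (2*y) := by
            exact mul_le_mul_of_nonneg_left hu.2 (abs_nonneg t)
          rw [abs_mul, abs_of_nonneg hy.le] at *
          linarith
        rw [h1]
        nlinarith
      have hb := sin_sq_bound hx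
      have hx2 : (0:ℝ) < (Real.pi * t * u)^2 := by
        have := hne u hu; positivity
      rw [div_pow, le_div_iff₀ hx2]
      nlinarith
    have hint : ((1:ℝ)/16) * y ≤
        ∫ u in y..(2*y), (Real.sin (Real.pi * t * u) / (Real.pi * t * u)) ^ 2 := by
      have := intervalIntegral.integral_mono_on (μ := MeasureTheory.volume) hle
        (_root_.intervalIntegrable_const (c := ((1:ℝ)/16))) hfi hpt
      rwa [intervalIntegral.integral_const, smul_eq_mul, show 2*y - y = y by ring,
        mul_comm] at this
    have : ((1:ℝ)/16) ≤
        (1 / y) * ∫ u in y..(2*y), (Real.sin (Real.pi * t * u) / (Real.pi * t * u)) ^ 2 := by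
      have h := mul_le_mul_of_nonneg_left hint (le_of_lt (one_div_pos.mpr hy))
      have he : (1/y)*((1:ℝ)/16*y) = (1:ℝ)/16 := by field_simp
      linarith
    have hc : (1/1000 : ℝ) * min 1 (1 / (t * y) ^ 2) ≤ (1:ℝ)/16 := by
      have : (1/1000 : ℝ) * min 1 (1 / (t * y) ^ 2) ≤ 1/1000 := by nlinarith
      have h8 : (1/1000 : ℝ) ≤ (1:ℝ)/16 := by norm_num
      linarith
    linarith
  · -- large case
    have hty2 : (0:ℝ) < (t*y)^2 := by positivity
    -- pointwise bound
    have hpt : ∀ u ∈ Set.Icc y (2*y),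
        Real.sin (Real.pi * t * u) ^ 2 * (4 * Real.pi^2 * (t*y)^2)⁻¹
          ≤ (Real.sin (Real.pi * t * u) / (Real.pi * t * u)) ^ 2 := by
      intro u hu
      have hu0 : (0:ℝ) < u := lt_of_lt_of_le hy hu.1
      have hx2 : (0:ℝ) < (Real.pi * t * u)^2 := by
        have := hne u hu; positivity
      have hu2 : u^2 ≤ 4*y^2 := by nlinarith [hu.1, hu.2]
      have hle2 : (Real.pi * t * u)^2 ≤ 4 * Real.pi^2 * (t*y)^2 := by
        calc (Real.pi * t * u)^2 = (Real.pi*t)^2 * u^2 := by ring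
          _ ≤ (Real.pi*t)^2 * (4*y^2) := mul_le_mul_of_nonneg_left hu2 (sq_nonneg _)
          _ = 4 * Real.pi^2 * (t*y)^2 := by ring
      rw [div_pow]
      rw [div_eq_mul_inv]
      apply mul_le_mul_of_nonneg_left _ (sq_nonneg _)
      exact inv_anti₀ hx2 hle2
    have hgi : IntervalIntegrable
        (fun u => Real.sin (Real.pi * t * u) ^ 2 * (4 * Real.pi^2 * (t*y)^2)⁻¹)
        MeasureTheory.volume y (2*y) := by
      apply Continuous.intervalIntegrable
      exact ((Real.continuous_sin.comp (continuous_const.mul continuous_id)).pow 2).mul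
        continuous_const
    have hmono := intervalIntegral.integral_mono_on (μ := MeasureTheory.volume) hle hgi hfi hpt
    -- compute ∫ sin² term
    have hct : Real.pi * t ≠ 0 := mul_ne_zero (ne_of_gt hπ) ht
    have hJ : (∫ u in y..(2*y), Real.sin (Real.pi * t * u) ^ 2)
        = (Real.pi * t)⁻¹ * ((Real.sin (Real.pi*t*y) * Real.cos (Real.pi*t*y)
            - Real.sin (Real.pi*t*(2*y)) * Real.cos (Real.pi*t*(2*y))
            + Real.pi*t*(2*y) - Real.pi*t*y) / 2) := by
      have key := intervalIntegral.integral_comp_mul_left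
        (f := fun x => Real.sin x ^ 2) (a := y) (b := 2*y) (c := Real.pi * t) hct
      rw [integral_sin_sq] at key
      simp only [smul_eq_mul] at key
      exact key
    have hJge : y * (1/2 - 4/(3*Real.pi)) ≤ ∫ u in y..(2*y), Real.sin (Real.pi * t * u) ^ 2 := by
      rw [hJ]
      have e1 := abs_sin_mul_cos_le' (Real.pi*t*y)
      have e2 := abs_sin_mul_cos_le' (Real.pi*t*(2*y))
      set A := Real.sin (Real.pi*t*y) * Real.cos (Real.pi*t*y)
      set B := Real.sin (Real.pi*t*(2*y)) * Real.cos (Real.pi*t*(2*y))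
      have hA := abs_le.mp e1
      have hB := abs_le.mp e2
      have hexp : (Real.pi * t)⁻¹ * ((A - B + Real.pi*t*(2*y) - Real.pi*t*y) / 2)
          = y/2 + (A - B) / (2 * (Real.pi * t)) := by
        field_simp
        ring
      rw [hexp]
      have habs : |(A - B) / (2 * (Real.pi * t))| ≤ 4*y/(3*Real.pi) := by
        rw [abs_div]
        have hAB : |A - B| ≤ 1 := by
          calc |A - B| ≤ |A| + |B| := abs_sub _ _
            _ ≤ 1 := by linarith
        have hden : |2 * (Real.pi * t)| = 2 * Real.pi * |t| := by
          rw [abs_mul, abs_mul, abs_of_nonneg hπ.le]; norm_num; ring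
        rw [hden]
        have ht38 : 3/8 ≤ |t| * y := by
          rw [abs_mul, abs_of_nonneg hy.le] at hs; linarith
        have ht0 : 0 < |t| := abs_pos.mpr ht
        rw [div_le_div_iff₀ (by positivity) (by positivity)]
        calc |A - B| * (3 * Real.pi) ≤ 3 * Real.pi := by nlinarith
          _ ≤ 4*y*(2*Real.pi*|t|) := by nlinarith
      have h5 := (abs_le.mp habs).1
      have hEq : y * (1/2 - 4/(3*Real.pi)) = y/2 - 4*y/(3*Real.pi) := by ring
      linarith
    -- combine
    have hgval : (∫ u in y..(2*y),
        Real.sin (Real.pi * t * u) ^ 2 * (4 * Real.pi^2 * (t*y)^2)⁻¹)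
        = (∫ u in y..(2*y), Real.sin (Real.pi * t * u) ^ 2) * (4 * Real.pi^2 * (t*y)^2)⁻¹ :=
      intervalIntegral.integral_mul_const ((4 * Real.pi^2 * (t*y)^2)⁻¹)
        (fun u => Real.sin (Real.pi * t * u) ^ 2)
    have hI : y * (1/2 - 4/(3*Real.pi)) * (4 * Real.pi^2 * (t*y)^2)⁻¹ ≤
        ∫ u in y..(2*y), (Real.sin (Real.pi * t * u) / (Real.pi * t * u)) ^ 2 := by
      rw [hgval] at hmono
      have : y * (1/2 - 4/(3*Real.pi)) * (4 * Real.pi^2 * (t*y)^2)⁻¹ ≤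
          (∫ u in y..(2*y), Real.sin (Real.pi * t * u) ^ 2) * (4 * Real.pi^2 * (t*y)^2)⁻¹ := by
        apply mul_le_mul_of_nonneg_right hJge (by positivity)
      exact le_trans this hmono
    have hfinal : (1/1000 : ℝ) * (1 / (t*y)^2) ≤
        (1/y) * (y * (1/2 - 4/(3*Real.pi)) * (4 * Real.pi^2 * (t*y)^2)⁻¹) := by
      have : (1/y) * (y * (1/2 - 4/(3*Real.pi)) * (4 * Real.pi^2 * (t*y)^2)⁻¹)
          = (1/2 - 4/(3*Real.pi)) / (4 * Real.pi^2) * (1 / (t*y)^2) := by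
        field_simp
      rw [this]
      apply mul_le_mul_of_nonneg_right _ (by positivity)
      rw [le_div_iff₀ (by positivity : (0:ℝ) < 4 * Real.pi^2)]
      have h34 : 4/(3*Real.pi) ≤ 0.43 := by
        rw [div_le_iff₀ (by positivity : (0:ℝ) < 3 * Real.pi)]
        nlinarith
      nlinarith
    have hIavg : (1/y) * (y * (1/2 - 4/(3*Real.pi)) * (4 * Real.pi^2 * (t*y)^2)⁻¹) ≤
        (1/y) * ∫ u in y..(2*y), (Real.sin (Real.pi * t * u) / (Real.pi * t * u)) ^ 2 := by
      apply mul_le_mul_of_nonneg_left hI (by positivity)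
    have hm : (1/1000 : ℝ) * min 1 (1 / (t * y) ^ 2) ≤ (1/1000 : ℝ) * (1 / (t*y)^2) := by
      nlinarith
    linarith
end
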